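/- arXiv:2011.05686 — 2 statements merged into one kernel-verified Lean document; each statement's English description precedes it below -/
import Mathlib

section
/- Let F be a finite set, π a probability measure on F with full support, and for each z ∈ F let p ↦ V_p(z) be convex, differentiable and finite on ℝ^d with V_0(z)=0. Set H_π(p) = Σ_z V_p(z) π(z) and L_π(v) = sup_p (⟨p,v⟩ − H_π(p)). Suppose p* ∈ ℝ^d satisfies ∇H_π(p*) = v. Then L_π(v) = Σ_z π(z) L_z(w*(z)), where w*(z) := ∇_p V_{p*}(z) and L_z(u) = sup_p (⟨p,u⟩ − V_p(z)); in particular Σ_z π(z) w*(z) = v and the infimum of Σ_z π(z) L_z(w(z)) over all w with Σ_z π(z) w(z) = v is attained at w*. -/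
open scoped RealInnerProductSpace

/-- Inner-product form of the fderiv for real functions via the gradient. -/
lemma fderiv_apply_eq_inner_gradient {d : ℕ} (f : EuclideanSpace ℝ (Fin d) → ℝ)
    (x u : EuclideanSpace ℝ (Fin d)) :
    ⟪gradient f x, u⟫ = fderiv ℝ f x u := by
  simp [gradient, InnerProductSpace.toDual_symm_apply]

/-- Gradient inequality for convex differentiable functions. -/
lemma inner_gradient_le_sub {d : ℕ} (f : EuclideanSpace ℝ (Fin d) → ℝ)
    (hconv : ConvexOn ℝ Set.univ f) (hdiff : Differentiable ℝ f)
    (x y : EuclideanSpace ℝ (Fin d)) :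
    ⟪gradient f x, y - x⟫ ≤ f y - f x := by
  set g : ℝ → ℝ := fun t => f (x + t • (y - x)) with hg
  have hline : ∀ t : ℝ, x + t • (y - x) = AffineMap.lineMap x y t := by
    intro t
    simp [AffineMap.lineMap_apply, add_comm]
  have hgconv : ConvexOn ℝ Set.univ g := by
    have h := hconv.comp_affineMap (AffineMap.lineMap x y)
    have : g = f ∘ (AffineMap.lineMap x y) := by
      funext t; simp [hg, hline t]
    rw [this]
    simpa using h
  have hc : HasDerivAt (fun t : ℝ => x + t • (y - x)) (y - x) 0 := by
    simpa using ((hasDerivAt_id (0:ℝ)).smul_const (y - x)).const_add x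
  have hF : HasFDerivAt f (fderiv ℝ f x) (x + (0:ℝ) • (y - x)) := by
    simpa using (hdiff x).hasFDerivAt
  have hgd : HasDerivAt g (fderiv ℝ f x (y - x)) 0 := hF.comp_hasDerivAt 0 hc
  have hslope := hgconv.le_slope_of_hasDerivAt (Set.mem_univ (0:ℝ)) (Set.mem_univ (1:ℝ))
    one_pos hgd
  have hslope' : fderiv ℝ f x (y - x) ≤ f y - f x := by
    have : slope g 0 1 = f y - f x := by
      simp [slope_def_field, hg]
    linarith [hslope, this.symm ▸ hslope]
  rw [fderiv_apply_eq_inner_gradient]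
  exact hslope'

/-- The Legendre supremum of a convex differentiable function is attained at a point where
the gradient equals the given slope. -/
lemma legendre_attained {d : ℕ} (f : EuclideanSpace ℝ (Fin d) → ℝ)
    (hconv : ConvexOn ℝ Set.univ f) (hdiff : Differentiable ℝ f)
    (x v : EuclideanSpace ℝ (Fin d)) (hv : gradient f x = v) :
    (⨆ p : EuclideanSpace ℝ (Fin d), ((⟪p, v⟫ : ℝ) : EReal) - ((f p : ℝ) : EReal))
      = ((⟪x, v⟫ - f x : ℝ) : EReal) := by
  apply le_antisymm
  · apply iSup_le
    intro p
    rw [← EReal.coe_sub, EReal.coe_le_coe_iff]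
    have h := inner_gradient_le_sub f hconv hdiff x p
    rw [hv] at h
    have hi : ⟪v, p - x⟫ = ⟪p, v⟫ - ⟪x, v⟫ := by
      rw [real_inner_comm, inner_sub_left]
    linarith [h, hi ▸ h]
  · exact le_iSup_of_le x (by rw [← EReal.coe_sub])

/-- The pointwise Lagrangian `L_z(u) = sup_p (⟨p,u⟩ − V_p(z))`. -/
noncomputable def pointLagrangian {d : ℕ} {F : Type*}
    (V : EuclideanSpace ℝ (Fin d) → F → ℝ) (z : F)
    (u : EuclideanSpace ℝ (Fin d)) : EReal :=
  ⨆ p : EuclideanSpace ℝ (Fin d), ((⟪p, u⟫ : ℝ) : EReal) - ((V p z : ℝ) : EReal)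

/-- Finite-state version of the double-optimization representation of the Lagrangian:
if `∇H_π(p*) = v`, then with `w*(z) := ∇_p V_{p*}(z)` one has `Σ_z π(z) w*(z) = v`,
`L_π(v) = Σ_z π(z) L_z(w*(z))`, and `w*` minimizes `Σ_z π(z) L_z(w(z))` among all
velocity fields `w` with mean `v`. -/
theorem lagrangian_double_optimization {d : ℕ} {F : Type*} [Fintype F]
    (π : F → ℝ) (hπpos : ∀ z, 0 < π z) (hπ1 : ∑ z, π z = 1)
    (V : EuclideanSpace ℝ (Fin d) → F → ℝ)
    (hVconv : ∀ z, ConvexOn ℝ Set.univ (fun p => V p z))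
    (hVdiff : ∀ z, Differentiable ℝ (fun p => V p z))
    (hV0 : ∀ z, V 0 z = 0)
    (pstar v : EuclideanSpace ℝ (Fin d))
    (hgrad : gradient (fun p => ∑ z, π z * V p z) pstar = v) :
    (∑ z, π z • gradient (fun p => V p z) pstar = v) ∧
    ((⨆ p : EuclideanSpace ℝ (Fin d),
        ((⟪p, v⟫ : ℝ) : EReal) - ((∑ z, π z * V p z : ℝ) : EReal))
      = ∑ z, ((π z : ℝ) : EReal) * pointLagrangian V z (gradient (fun p => V p z) pstar)) ∧
    (∀ w : F → EuclideanSpace ℝ (Fin d), (∑ z, π z • w z = v) →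
      (∑ z, ((π z : ℝ) : EReal) * pointLagrangian V z (gradient (fun p => V p z) pstar))
        ≤ ∑ z, ((π z : ℝ) : EReal) * pointLagrangian V z (w z)) := by
  set H : EuclideanSpace ℝ (Fin d) → ℝ := fun p => ∑ z, π z * V p z with hH
  set wstar : F → EuclideanSpace ℝ (Fin d) := fun z => gradient (fun p => V p z) pstar
    with hwstar
  -- H is differentiable with gradient at pstar equal to ∑ π z • wstar z
  have hHfd : ∀ p, HasFDerivAt H (∑ z, π z • fderiv ℝ (fun p => V p z) p) p := by
    intro p
    exact HasFDerivAt.fun_sum fun z _ => ((hVdiff z) p).hasFDerivAt.const_mul (π z)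
  have hHdiff : Differentiable ℝ H := fun p => (hHfd p).differentiableAt
  have hHgrad : gradient H pstar = ∑ z, π z • wstar z := by
    simp only [gradient, (hHfd pstar).fderiv, map_sum, map_smul, hwstar]
  have hmean : ∑ z, π z • wstar z = v := by rw [← hHgrad, hH]; exact hgrad
  -- H is convex
  have hHconv : ConvexOn ℝ Set.univ H := by
    refine ⟨convex_univ, fun x _ y _ a b ha hb hab => ?_⟩
    simp only [hH]
    rw [Finset.smul_sum, Finset.smul_sum, ← Finset.sum_add_distrib]
    refine Finset.sum_le_sum fun z _ => ?_
    have h := (hVconv z).2 (Set.mem_univ x) (Set.mem_univ y) ha hb hab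
    have hπ := (hπpos z).le
    calc π z * V (a • x + b • y) z ≤ π z * (a * V x z + b * V y z) :=
          mul_le_mul_of_nonneg_left h hπ
      _ = a • (π z * V x z) + b • (π z * V y z) := by ring_nf
  -- each pointLagrangian at wstar z is attained at pstar
  have hpt : ∀ z, pointLagrangian V z (wstar z)
      = ((⟪pstar, wstar z⟫ - V pstar z : ℝ) : EReal) := fun z =>
    legendre_attained (fun p => V p z) (hVconv z) (hVdiff z) pstar (wstar z) rfl
  -- the real identity: ⟪pstar, v⟫ - H pstar = ∑ π z * (⟪pstar, wstar z⟫ - V pstar z)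
  have hkey : ∀ u : F → EuclideanSpace ℝ (Fin d), (∑ z, π z • u z = v) →
      ⟪pstar, v⟫ - H pstar = ∑ z, π z * (⟪pstar, u z⟫ - V pstar z) := by
    intro u hu
    rw [← hu, inner_sum]
    simp only [real_inner_smul_right, hH]
    rw [← Finset.sum_sub_distrib]
    congr 1; funext z; ring
  have hsum_coe : ∀ r : F → ℝ, ∑ z, ((π z : ℝ) : EReal) * ((r z : ℝ) : EReal)
      = (((∑ z, π z * r z : ℝ)) : EReal) := by
    intro r
    classical
    induction (Finset.univ : Finset F) using Finset.induction with
    | empty => simp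
    | insert a s h ih =>
      rw [Finset.sum_insert h, Finset.sum_insert h, EReal.coe_add, ih, EReal.coe_mul]
  have hLpi : (⨆ p : EuclideanSpace ℝ (Fin d),
      ((⟪p, v⟫ : ℝ) : EReal) - ((∑ z, π z * V p z : ℝ) : EReal))
      = ((⟪pstar, v⟫ - H pstar : ℝ) : EReal) :=
    legendre_attained H hHconv hHdiff pstar v (hH ▸ hgrad)
  refine ⟨hmean, ?_, ?_⟩
  · rw [hLpi]
    have : ∑ z, ((π z : ℝ) : EReal) * pointLagrangian V z (wstar z)
        = (((∑ z, π z * (⟪pstar, wstar z⟫ - V pstar z) : ℝ)) : EReal) := by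
      rw [← hsum_coe fun z => ⟪pstar, wstar z⟫ - V pstar z]
      exact Finset.sum_congr rfl fun z _ => by rw [hpt z]
    rw [this, hkey wstar hmean]
  · intro w hw
    have hstep : ∀ z, ((π z : ℝ) : EReal) * ((⟪pstar, w z⟫ - V pstar z : ℝ) : EReal)
        ≤ ((π z : ℝ) : EReal) * pointLagrangian V z (w z) := by
      intro z
      refine mul_le_mul_of_nonneg_left ?_ (by exact_mod_cast (hπpos z).le)
      exact le_iSup_of_le pstar (by rw [← EReal.coe_sub])
    calc ∑ z, ((π z : ℝ) : EReal) * pointLagrangian V z (wstar z)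
        = (((∑ z, π z * (⟪pstar, wstar z⟫ - V pstar z) : ℝ)) : EReal) := by
          rw [← hsum_coe fun z => ⟪pstar, wstar z⟫ - V pstar z]
          exact Finset.sum_congr rfl fun z _ => by rw [hpt z]
      _ = ((⟪pstar, v⟫ - H pstar : ℝ) : EReal) := by rw [← hkey wstar hmean]
      _ = (((∑ z, π z * (⟪pstar, w z⟫ - V pstar z) : ℝ)) : EReal) := by rw [← hkey w hw]
      _ = ∑ z, ((π z : ℝ) : EReal) * ((⟪pstar, w z⟫ - V pstar z : ℝ) : EReal) :=
          (hsum_coe _).symm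
      _ ≤ ∑ z, ((π z : ℝ) : EReal) * pointLagrangian V z (w z) :=
          Finset.sum_le_sum fun z _ => hstep z
end

section
/- Let H(p) = sup_{π ∈ K} (G(p,π) − I(π)), where K is a compact metric space, G : ℝ^d × K → ℝ is continuous and p ↦ G(p,π) is convex for each π, and I : K → [0,∞] is lower semicontinuous with I not identically +∞. Then the Legendre transform L(v) = sup_p (⟨p,v⟩ − H(p)) satisfies L(v) = inf_{π ∈ K} [ sup_p (⟨p,v⟩ − G(p,π)) + I(π) ], provided additionally that π ↦ G(p,π) is concave for each p and π ↦ I(π) is convex (so that Sion's minimax theorem applies). -/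
set_option linter.unusedSectionVars false
set_option maxHeartbeats 1000000

open scoped ENNReal RealInnerProductSpace

namespace LegendreMinimaxAux

open Set

/-! ### EReal helper lemmas -/

lemma ereal_le_sub_iff {β r : ℝ} {J : ℝ≥0∞} :
    (β : EReal) ≤ (r : EReal) - (J : EReal) ↔ J ≠ ⊤ ∧ β + J.toReal ≤ r := by
  induction J using ENNReal.recTopCoe with
  | top => simp [EReal.sub_top]
  | coe x =>
      rw [show ((x : ℝ≥0∞) : EReal) = ((x : ℝ) : EReal) by rfl, ← EReal.coe_sub,
        EReal.coe_le_coe_iff]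
      simp only [ne_eq, ENNReal.coe_ne_top, not_false_iff, true_and, ENNReal.coe_toReal]
      constructor <;> intro h <;> linarith

lemma ereal_lt_sub_iff {β r : ℝ} {J : ℝ≥0∞} :
    (β : EReal) < (r : EReal) - (J : EReal) ↔ J ≠ ⊤ ∧ β + J.toReal < r := by
  induction J using ENNReal.recTopCoe with
  | top => simp [EReal.sub_top]
  | coe x =>
      rw [show ((x : ℝ≥0∞) : EReal) = ((x : ℝ) : EReal) by rfl, ← EReal.coe_sub,
        EReal.coe_lt_coe_iff]
      simp only [ne_eq, ENNReal.coe_ne_top, not_false_iff, true_and, ENNReal.coe_toReal]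
      constructor <;> intro h <;> linarith

lemma ereal_neg_iSup {ι : Sort*} (f : ι → EReal) : -(⨆ i, f i) = ⨅ i, -(f i) := by
  apply le_antisymm
  · exact le_iInf fun i => EReal.neg_le_neg_iff.2 (le_iSup f i)
  · rw [← EReal.neg_le_neg_iff, neg_neg]
    exact iSup_le fun i => by
      rw [← neg_neg (f i)]
      exact EReal.neg_le_neg_iff.2 (iInf_le (fun i => -(f i)) i)

lemma ereal_neg_iInf {ι : Sort*} (f : ι → EReal) : -(⨅ i, f i) = ⨆ i, -(f i) := by
  rw [← neg_neg (⨆ i, -(f i)), ereal_neg_iSup]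
  simp [neg_neg]

lemma ereal_iSup_sub_const {ι : Sort*} [Nonempty ι] (f : ι → EReal) (b : ℝ) :
    (⨆ i, f i) - (b : EReal) = ⨆ i, (f i - (b : EReal)) := by
  apply le_antisymm
  · rw [EReal.sub_le_iff_le_add (Or.inl (EReal.coe_ne_bot b)) (Or.inl (EReal.coe_ne_top b))]
    exact iSup_le fun i =>
      le_trans (le_of_eq (EReal.sub_add_cancel).symm)
        (add_le_add_left (le_iSup (fun j => f j - (b : EReal)) i) _)
  · exact iSup_le fun i => EReal.sub_le_sub (le_iSup f i) le_rfl

lemma ereal_iInf_sub_const {ι : Sort*} [Nonempty ι] (f : ι → EReal) (b : ℝ) :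
    (⨅ i, f i) - (b : EReal) = ⨅ i, (f i - (b : EReal)) := by
  apply le_antisymm
  · exact le_iInf fun i => EReal.sub_le_sub (iInf_le f i) le_rfl
  · rw [EReal.le_sub_iff_add_le (Or.inl (EReal.coe_ne_bot b)) (Or.inl (EReal.coe_ne_top b))]
    exact le_iInf fun i =>
      le_trans (add_le_add_left (iInf_le (fun j => f j - (b : EReal)) i) _)
        (le_of_eq EReal.sub_add_cancel)

lemma ereal_const_sub (b : ℝ) (x : EReal) : (b : EReal) - x = -(x - (b : EReal)) := by
  induction x with
  | bot => simp [EReal.coe_sub_bot, EReal.bot_sub]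
  | coe r => rw [← EReal.coe_sub, ← EReal.coe_sub, ← EReal.coe_neg]; norm_num
  | top => simp [EReal.sub_top, EReal.top_sub_coe]

lemma ereal_le_of_forall_real_lt {x y : EReal} (h : ∀ α : ℝ, (α : EReal) < x → (α : EReal) ≤ y) :
    x ≤ y := by
  by_contra hxy
  push_neg at hxy
  obtain ⟨α, hy, hx⟩ := EReal.exists_between_coe_real hxy
  exact absurd (h α hx) (not_le.2 hy)



open Set

/-- Split of a preconnected set over two "relatively closed" disjoint pieces. -/
lemma preconn_split {X : Type*} [TopologicalSpace X] {s D₁ D₂ : Set X}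
    (hs : IsPreconnected s) (hsub : s ⊆ D₁ ∪ D₂)
    (h1 : ∀ x ∈ s, x ∈ closure D₁ → x ∈ D₁)
    (h2 : ∀ x ∈ s, x ∈ closure D₂ → x ∈ D₂)
    (hdisj : ∀ x, ¬(x ∈ D₁ ∧ x ∈ D₂)) :
    s ⊆ D₁ ∨ s ⊆ D₂ := by
  have hu : IsOpen (closure D₂)ᶜ := isClosed_closure.isOpen_compl
  have hv : IsOpen (closure D₁)ᶜ := isClosed_closure.isOpen_compl
  have hcover : s ⊆ (closure D₂)ᶜ ∪ (closure D₁)ᶜ := by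
    intro x hx
    rcases hsub hx with hx1 | hx2
    · left
      intro hc
      exact hdisj x ⟨hx1, h2 x hx hc⟩
    · right
      intro hc
      exact hdisj x ⟨h1 x hx hc, hx2⟩
  have hempty : ¬(s ∩ ((closure D₂)ᶜ ∩ (closure D₁)ᶜ)).Nonempty := by
    rintro ⟨x, hxs, hx2, hx1⟩
    rcases hsub hxs with h | h
    · exact hx1 (subset_closure h)
    · exact hx2 (subset_closure h)
  rcases (s ∩ (closure D₂)ᶜ).eq_empty_or_nonempty with he | hne
  · -- s ⊆ closure D₂
    right
    intro x hx
    refine h2 x hx ?_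
    by_contra hc
    exact absurd (Set.eq_empty_iff_forall_notMem.1 he x) (by simp [hx, hc])
  · rcases (s ∩ (closure D₁)ᶜ).eq_empty_or_nonempty with he' | hne'
    · left
      intro x hx
      refine h1 x hx ?_
      by_contra hc
      exact absurd (Set.eq_empty_iff_forall_notMem.1 he' x) (by simp [hx, hc])
    · exact absurd (hs _ _ hu hv hcover hne hne') hempty

section Core

variable {V : Type*} [AddCommGroup V] [Module ℝ V] [TopologicalSpace V]
    [IsTopologicalAddGroup V] [ContinuousSMul ℝ V]
variable {P : Type*} [AddCommGroup P] [Module ℝ P] [TopologicalSpace P]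
    [IsTopologicalAddGroup P] [ContinuousSMul ℝ P] [Nonempty P]
variable (g : V → P → EReal)

/-- The superlevel set of `g · p` at level `β` within `A`. -/
def Sl (A : Set V) (p : P) (β : ℝ) : Set V := {π ∈ A | (β : EReal) ≤ g π p}

lemma Sl_subset (A : Set V) (p : P) (β : ℝ) : Sl g A p β ⊆ A := fun _ h => h.1

/-- Komiya's Lemma 1: the two-point lemma. -/
lemma pair_lemma (A : Set V)
    (hconv : ∀ (p : P) (β : ℝ), Convex ℝ (Sl g A p β))
    (hcl : ∀ (p : P) (β : ℝ), ∀ x ∈ A, x ∈ closure (Sl g A p β) → (β : EReal) ≤ g x p)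
    (hqcx : ∀ π ∈ A, ∀ p₁ p₂ : P, ∀ t ∈ Icc (0:ℝ) 1,
      g π ((1 - t) • p₁ + t • p₂) ≤ max (g π p₁) (g π p₂))
    (hopen : ∀ π ∈ A, ∀ β : ℝ, IsOpen {p : P | (β : EReal) < g π p})
    {α β : ℝ} (hαβ : α < β) (p₁ p₂ : P)
    (hseg : ∀ t ∈ Icc (0:ℝ) 1, ∃ π ∈ A, (β : EReal) < g π ((1 - t) • p₁ + t • p₂)) :
    ∃ π ∈ A, (α : EReal) < g π p₁ ∧ (α : EReal) < g π p₂ := by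
  by_contra hcon
  push_neg at hcon
  have hαβ' : (α : EReal) < (β : EReal) := EReal.coe_lt_coe_iff.2 hαβ
  set z : ℝ → P := fun t => (1 - t) • p₁ + t • p₂ with hz_def
  have hz : Continuous z := by
    exact ((continuous_const.sub continuous_id).smul continuous_const).add
      (continuous_id.smul continuous_const)
  have hz0 : z 0 = p₁ := by simp [hz_def]
  have hz1 : z 1 = p₂ := by simp [hz_def]
  set D₁ := Sl g A p₁ β with hD₁
  set D₂ := Sl g A p₂ β with hD₂
  have hdisj : ∀ x, ¬(x ∈ D₁ ∧ x ∈ D₂) := by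
    rintro x ⟨h1, h2⟩
    exact absurd (hcon x h1.1 (lt_of_lt_of_le hαβ' h1.2)) (not_le.2 (lt_of_lt_of_le hαβ' h2.2))
  -- the split along the segment
  have hsplit : ∀ t ∈ Icc (0:ℝ) 1, Sl g A (z t) β ⊆ D₁ ∨ Sl g A (z t) β ⊆ D₂ := by
    intro t ht
    refine preconn_split ((hconv (z t) β).isPreconnected) ?_ ?_ ?_ hdisj
    · intro π hπ
      rcases le_max_iff.1 (le_trans hπ.2 (hqcx π hπ.1 p₁ p₂ t ht)) with h | h
      · exact Or.inl ⟨hπ.1, h⟩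
      · exact Or.inr ⟨hπ.1, h⟩
    · exact fun x hx hc => ⟨hx.1, hcl p₁ β x hx.1 hc⟩
    · exact fun x hx hc => ⟨hx.1, hcl p₂ β x hx.1 hc⟩
  set A₁ := {t ∈ Icc (0:ℝ) 1 | Sl g A (z t) β ⊆ D₁} with hA₁
  set A₂ := {t ∈ Icc (0:ℝ) 1 | Sl g A (z t) β ⊆ D₂} with hA₂
  have key : ∀ t ∈ Icc (0:ℝ) 1, ∀ (D : Set V), (∀ s ∈ Icc (0:ℝ) 1, Sl g A (z s) β ⊆ D ∨ Sl g A (z s) β ⊆ Dᶜ) →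
      t ∈ closure {s ∈ Icc (0:ℝ) 1 | Sl g A (z s) β ⊆ D} →
      Sl g A (z t) β ⊆ D := by
    intro t ht D hD hclos
    obtain ⟨π, hπA, hπ⟩ := hseg t ht
    have hO : IsOpen (z ⁻¹' {p : P | (β : EReal) < g π p}) := (hopen π hπA β).preimage hz
    have htO : t ∈ z ⁻¹' {p : P | (β : EReal) < g π p} := hπ
    obtain ⟨t', ht'O, ht'A⟩ := _root_.mem_closure_iff.1 hclos _ hO htO
    have hπt' : π ∈ Sl g A (z t') β := ⟨hπA, le_of_lt ht'O⟩
    have hπt : π ∈ Sl g A (z t) β := ⟨hπA, le_of_lt hπ⟩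
    have hπD : π ∈ D := ht'A.2 hπt'
    rcases hD t ht with h | h
    · exact h
    · exact absurd hπD (h hπt)
  have hA₁Icc : A₁ ⊆ Icc (0:ℝ) 1 := fun t ht => ht.1
  have hA₂Icc : A₂ ⊆ Icc (0:ℝ) 1 := fun t ht => ht.1
  have hD₁split : ∀ s ∈ Icc (0:ℝ) 1, Sl g A (z s) β ⊆ D₁ ∨ Sl g A (z s) β ⊆ D₁ᶜ := by
    intro s hs
    rcases hsplit s hs with h | h
    · exact Or.inl h
    · exact Or.inr fun x hx hxD₁ => hdisj x ⟨hxD₁, h hx⟩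
  have hD₂split : ∀ s ∈ Icc (0:ℝ) 1, Sl g A (z s) β ⊆ D₂ ∨ Sl g A (z s) β ⊆ D₂ᶜ := by
    intro s hs
    rcases hsplit s hs with h | h
    · exact Or.inr fun x hx hxD₂ => hdisj x ⟨h hx, hxD₂⟩
    · exact Or.inl h
  have hc₁ : ∀ t ∈ Icc (0:ℝ) 1, t ∈ closure A₁ → t ∈ A₁ :=
    fun t ht hc => ⟨ht, key t ht D₁ hD₁split hc⟩
  have hc₂ : ∀ t ∈ Icc (0:ℝ) 1, t ∈ closure A₂ → t ∈ A₂ :=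
    fun t ht hc => ⟨ht, key t ht D₂ hD₂split hc⟩
  have hdisj' : ∀ t, ¬(t ∈ A₁ ∧ t ∈ A₂) := by
    rintro t ⟨h1, h2⟩
    obtain ⟨π, hπA, hπ⟩ := hseg t h1.1
    exact hdisj π ⟨h1.2 ⟨hπA, le_of_lt hπ⟩, h2.2 ⟨hπA, le_of_lt hπ⟩⟩
  have hcover : Icc (0:ℝ) 1 ⊆ A₁ ∪ A₂ := by
    intro t ht
    rcases hsplit t ht with h | h
    · exact Or.inl ⟨ht, h⟩
    · exact Or.inr ⟨ht, h⟩
  have h0 : (0:ℝ) ∈ A₁ := ⟨⟨le_refl 0, zero_le_one⟩, by rw [hz0]⟩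
  have h1 : (1:ℝ) ∈ A₂ := ⟨⟨zero_le_one, le_refl 1⟩, by rw [hz1]⟩
  rcases preconn_split isPreconnected_Icc hcover hc₁ hc₂ hdisj' with h | h
  · exact hdisj' 1 ⟨h ⟨zero_le_one, le_refl 1⟩, h1⟩
  · exact hdisj' 0 ⟨h0, h ⟨le_refl 0, zero_le_one⟩⟩

/-- Komiya's Lemma 2: the finite lemma, by induction on a list of points. -/
lemma list_lemma (L : List P) :
    ∀ (A : Set V), IsCompact A →
    (∀ (p : P) (β : ℝ), Convex ℝ (Sl g A p β)) →
    (∀ (p : P) (β : ℝ), ∀ x ∈ A, x ∈ closure (Sl g A p β) → (β : EReal) ≤ g x p) →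
    (∀ π ∈ A, ∀ p₁ p₂ : P, ∀ t ∈ Icc (0:ℝ) 1,
      g π ((1 - t) • p₁ + t • p₂) ≤ max (g π p₁) (g π p₂)) →
    (∀ π ∈ A, ∀ β : ℝ, IsOpen {p : P | (β : EReal) < g π p}) →
    ∀ (α β : ℝ), α < β → (∀ p : P, ∃ π ∈ A, (β : EReal) < g π p) →
    ∃ π ∈ A, ∀ p ∈ L, (α : EReal) < g π p := by
  induction L with
  | nil =>
      intro A _ _ _ _ _ α β _ hβ
      obtain ⟨π, hπA, _⟩ := hβ (Classical.arbitrary P)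
      exact ⟨π, hπA, by simp⟩
  | cons p L ih =>
      intro A hcpt hconv hcl hqcx hopen α β hαβ hβ
      set γ := (α + β) / 2 with hγ
      have hαγ : α < γ := by simp only [hγ]; linarith
      have hγβ : γ < β := by simp only [hγ]; linarith
      set A' := Sl g A p γ with hA'
      have hA'A : A' ⊆ A := Sl_subset g A p γ
      -- A' is relatively closed in A, hence compact
      have hA'eq : A' = A ∩ closure A' := by
        apply Subset.antisymm
        · exact fun x hx => ⟨hx.1, subset_closure hx⟩
        · rintro x ⟨hxA, hxc⟩
          exact ⟨hxA, hcl p γ x hxA hxc⟩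
      have hA'cpt : IsCompact A' := by
        rw [hA'eq]; exact hcpt.inter_right isClosed_closure
      -- superlevel sets of A' as intersections
      have hSl' : ∀ (q : P) (δ : ℝ), Sl g A' q δ = Sl g A q δ ∩ Sl g A p γ := by
        intro q δ
        ext x
        constructor
        · rintro ⟨⟨hxA, hxγ⟩, hxδ⟩; exact ⟨⟨hxA, hxδ⟩, hxA, hxγ⟩
        · rintro ⟨⟨hxA, hxδ⟩, _, hxγ⟩; exact ⟨⟨hxA, hxγ⟩, hxδ⟩
      have hconv' : ∀ (q : P) (δ : ℝ), Convex ℝ (Sl g A' q δ) := by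
        intro q δ; rw [hSl']; exact (hconv q δ).inter (hconv p γ)
      have hcl' : ∀ (q : P) (δ : ℝ), ∀ x ∈ A', x ∈ closure (Sl g A' q δ) →
          (δ : EReal) ≤ g x q := by
        intro q δ x hx hxc
        refine hcl q δ x hx.1 (closure_mono ?_ hxc)
        rw [hSl']; exact inter_subset_left
      have hqcx' : ∀ π ∈ A', ∀ p₁ p₂ : P, ∀ t ∈ Icc (0:ℝ) 1,
          g π ((1 - t) • p₁ + t • p₂) ≤ max (g π p₁) (g π p₂) :=
        fun π hπ => hqcx π (hA'A hπ)
      have hopen' : ∀ π ∈ A', ∀ β : ℝ, IsOpen {p : P | (β : EReal) < g π p} :=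
        fun π hπ => hopen π (hA'A hπ)
      -- condition for the recursive call, via the pair lemma
      have hβ' : ∀ q : P, ∃ π ∈ A', (γ : EReal) < g π q := by
        intro q
        obtain ⟨π, hπA, h1, h2⟩ := pair_lemma g A hconv hcl hqcx hopen hγβ q p
          (fun t _ => hβ _)
        exact ⟨π, ⟨hπA, le_of_lt h2⟩, h1⟩
      obtain ⟨π, hπA', hπ⟩ := ih A' hA'cpt hconv' hcl' hqcx' hopen' α γ hαγ hβ'
      refine ⟨π, hA'A hπA', ?_⟩
      intro q hq
      rcases List.mem_cons.1 hq with rfl | hq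
      · exact lt_of_lt_of_le (EReal.coe_lt_coe_iff.2 hαγ) hπA'.2
      · exact hπ q hq

/-- The minimax core: existence of a near-optimal `π` uniform in `p`. -/
lemma core (K₀ : Set V) (hcpt : IsCompact K₀)
    (hconv : ∀ (p : P) (β : ℝ), Convex ℝ (Sl g K₀ p β))
    (hcl : ∀ (p : P) (β : ℝ), ∀ x ∈ K₀, x ∈ closure (Sl g K₀ p β) → (β : EReal) ≤ g x p)
    (hqcx : ∀ π ∈ K₀, ∀ p₁ p₂ : P, ∀ t ∈ Icc (0:ℝ) 1,
      g π ((1 - t) • p₁ + t • p₂) ≤ max (g π p₁) (g π p₂))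
    (hopen : ∀ π ∈ K₀, ∀ β : ℝ, IsOpen {p : P | (β : EReal) < g π p})
    (α β : ℝ) (hαβ : α < β) (hβ : ∀ p : P, ∃ π ∈ K₀, (β : EReal) < g π p) :
    ∃ π ∈ K₀, ∀ p : P, (α : EReal) ≤ g π p := by
  by_contra hcon
  push_neg at hcon
  have hcover : K₀ ⊆ ⋃ p : P, (closure (Sl g K₀ p α))ᶜ := by
    intro π hπ
    obtain ⟨p, hp⟩ := hcon π hπ
    refine mem_iUnion.2 ⟨p, ?_⟩
    intro hc
    exact absurd (hcl p α π hπ hc) (not_le.2 hp)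
  obtain ⟨s, hs⟩ := hcpt.elim_finite_subcover _
    (fun p => isClosed_closure.isOpen_compl) hcover
  obtain ⟨π, hπK, hπ⟩ := list_lemma g s.toList K₀ hcpt hconv hcl hqcx hopen α β hαβ hβ
  obtain ⟨p, hps, hpc⟩ := by
    have := hs hπK
    simpa using this
  exact hpc (subset_closure ⟨hπK, le_of_lt (hπ p (Finset.mem_toList.2 hps))⟩)

end Core


lemma coe_ennreal_eq_toReal {J : ℝ≥0∞} (h : J ≠ ⊤) :
    (J : EReal) = ((J.toReal : ℝ) : EReal) := by
  induction J using ENNReal.recTopCoe with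
  | top => exact absurd rfl h
  | coe x => rw [show ((x : ℝ≥0∞) : EReal) = ((x : ℝ) : EReal) by rfl, ENNReal.coe_toReal]

end LegendreMinimaxAux

namespace LegendreMinimaxAux

open Set Filter Topology

theorem aux_minimax {V : Type*}
    [AddCommGroup V] [Module ℝ V] [TopologicalSpace V]
    [IsTopologicalAddGroup V] [ContinuousSMul ℝ V]
    {P : Type*} [AddCommGroup P] [Module ℝ P] [TopologicalSpace P]
    [IsTopologicalAddGroup P] [ContinuousSMul ℝ P] [Nonempty P]
    (K : Set V) (hKcompact : IsCompact K) (hKconv : Convex ℝ K)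
    (G : P → V → ℝ)
    (hGcont : ContinuousOn (fun q : P × V => G q.1 q.2) (Set.univ ×ˢ K))
    (hGconv : ∀ π ∈ K, ConvexOn ℝ Set.univ (fun p => G p π))
    (hGconc : ∀ p : P, ConcaveOn ℝ K (fun π => G p π))
    (I : V → ℝ≥0∞)
    (hIlsc : LowerSemicontinuousOn I K)
    (hIconv : ∀ π₁ ∈ K, ∀ π₂ ∈ K, ∀ a b : ℝ, 0 ≤ a → 0 ≤ b → a + b = 1 →
      I (a • π₁ + b • π₂) ≤ ENNReal.ofReal a * I π₁ + ENNReal.ofReal b * I π₂)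
    (hIproper : ∃ π ∈ K, I π ≠ ⊤)
    (H : P → EReal)
    (ℓ : P → ℝ) (hℓcont : Continuous ℓ)
    (hℓlin : ∀ (a b : ℝ) (p q : P), ℓ (a • p + b • q) = a * ℓ p + b * ℓ q)
    (hH : ∀ p, H p = ⨆ π : K, ((G p π : ℝ) : EReal) - (I π : EReal)) :
    (⨆ p : P, ((ℓ p : ℝ) : EReal) - H p)
      = ⨅ π : K, ((⨆ p : P, ((ℓ p : ℝ) : EReal) - ((G p π : ℝ) : EReal)) + (I π : EReal)) := by
  classical
  obtain ⟨π₀, hπ₀K, hπ₀⟩ := hIproper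
  haveI : Nonempty K := ⟨⟨π₀, hπ₀K⟩⟩
  set c : P → V → ℝ := fun p π => G p π - ℓ p with hc
  set g : V → P → EReal := fun π p => ((c p π : ℝ) : EReal) - (I π : EReal) with hg
  -- continuity facts
  have hcont_p : ∀ π ∈ K, Continuous fun p : P => c p π := by
    intro π hπ
    have h0 : ContinuousOn (fun p : P => (p, π)) univ :=
      (continuous_id.prodMk continuous_const).continuousOn
    have h1 : ContinuousOn ((fun q : P × V => G q.1 q.2) ∘ (fun p : P => (p, π))) univ :=
      hGcont.comp h0 fun p _ => ⟨trivial, hπ⟩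
    have h2 : Continuous fun p : P => G p π :=
      continuousOn_univ.1 h1
    exact h2.sub hℓcont
  have hcont_pi : ∀ p : P, ContinuousOn (fun π => c p π) K := by
    intro p
    have h0 : ContinuousOn (fun π : V => (p, π)) K :=
      (continuous_const.prodMk continuous_id).continuousOn
    have h1 : ContinuousOn ((fun q : P × V => G q.1 q.2) ∘ (fun π : V => (p, π))) K :=
      hGcont.comp h0 fun π hπ => ⟨trivial, hπ⟩
    exact h1.sub continuousOn_const
  -- convexity of superlevel sets
  have hconv : ∀ (p : P) (β : ℝ), Convex ℝ (Sl g K p β) := by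
    intro p β π₁ hπ₁ π₂ hπ₂ a b ha hb hab
    obtain ⟨hπ₁K, h₁⟩ := hπ₁
    obtain ⟨hπ₂K, h₂⟩ := hπ₂
    rw [hg] at h₁ h₂
    obtain ⟨hI₁, h₁⟩ := ereal_le_sub_iff.1 h₁
    obtain ⟨hI₂, h₂⟩ := ereal_le_sub_iff.1 h₂
    have hmemK : a • π₁ + b • π₂ ∈ K := hKconv hπ₁K hπ₂K ha hb hab
    refine ⟨hmemK, ?_⟩
    rw [hg]
    have hIbound := hIconv π₁ hπ₁K π₂ hπ₂K a b ha hb hab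
    have hfin : ENNReal.ofReal a * I π₁ + ENNReal.ofReal b * I π₂ ≠ ⊤ :=
      ENNReal.add_ne_top.2 ⟨ENNReal.mul_ne_top ENNReal.ofReal_ne_top hI₁,
        ENNReal.mul_ne_top ENNReal.ofReal_ne_top hI₂⟩
    have hIne : I (a • π₁ + b • π₂) ≠ ⊤ := fun h => hfin (eq_top_iff.2 (h ▸ hIbound))
    refine ereal_le_sub_iff.2 ⟨hIne, ?_⟩
    have htr : (I (a • π₁ + b • π₂)).toReal ≤ a * (I π₁).toReal + b * (I π₂).toReal := by
      have := ENNReal.toReal_mono hfin hIbound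
      rwa [ENNReal.toReal_add (ENNReal.mul_ne_top ENNReal.ofReal_ne_top hI₁)
        (ENNReal.mul_ne_top ENNReal.ofReal_ne_top hI₂), ENNReal.toReal_mul,
        ENNReal.toReal_mul, ENNReal.toReal_ofReal ha, ENNReal.toReal_ofReal hb] at this
    have hconc := (hGconc p).2 hπ₁K hπ₂K ha hb hab
    simp only [smul_eq_mul] at hconc
    have hcc : a * c p π₁ + b * c p π₂ ≤ c p (a • π₁ + b • π₂) := by
      simp only [hc]
      have hiden : a * ℓ p + b * ℓ p = ℓ p := by rw [← add_mul, hab, one_mul]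
      have e : a * (G p π₁ - ℓ p) + b * (G p π₂ - ℓ p)
          = a * G p π₁ + b * G p π₂ - (a * ℓ p + b * ℓ p) := by ring
      linarith [hconc, hiden, e.le, e.ge]
    have e₁ : a * (β + (I π₁).toReal) ≤ a * c p π₁ := mul_le_mul_of_nonneg_left h₁ ha
    have e₂ : b * (β + (I π₂).toReal) ≤ b * c p π₂ := mul_le_mul_of_nonneg_left h₂ hb
    have hbsum : a * β + b * β = β := by rw [← add_mul, hab, one_mul]
    nlinarith [e₁, e₂, hcc]
  -- relative closedness of superlevel sets
  have hcl : ∀ (p : P) (β : ℝ), ∀ x ∈ K, x ∈ closure (Sl g K p β) → (β : EReal) ≤ g x p := by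
    intro p β x hxK hxc
    by_contra hlt'
    have hlt : ((c p x : ℝ) : EReal) - (I x : EReal) < (β : EReal) := by
      rw [hg] at hlt'; exact not_le.1 hlt'
    have hSsub : Sl g K p β ⊆ K := Sl_subset g K p β
    have hne : (𝓝[Sl g K p β] x).NeBot := mem_closure_iff_nhdsWithin_neBot.1 hxc
    have hmemS : ∀ᶠ π in 𝓝[Sl g K p β] x, π ∈ Sl g K p β := self_mem_nhdsWithin
    have hcw : Filter.Tendsto (fun π => c p π) (𝓝[K] x) (𝓝 (c p x)) :=
      (hcont_pi p) x hxK
    rcases lt_or_ge (c p x) β with hr | hr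
    · have hev : ∀ᶠ π in 𝓝[K] x, c p π < β := hcw.eventually_lt_const hr
      have hev' : ∀ᶠ π in 𝓝[Sl g K p β] x, c p π < β :=
        hev.filter_mono (nhdsWithin_mono x hSsub)
      obtain ⟨π, hπlt, hπS⟩ := (hev'.and hmemS).exists
      have hmem := ereal_le_sub_iff.1 (show (β : EReal) ≤ ((c p π : ℝ) : EReal) - (I π : EReal)
        from hπS.2)
      have h0 : (0:ℝ) ≤ (I π).toReal := ENNReal.toReal_nonneg
      linarith [hmem.2]
    · set r : ℝ := c p x - β with hrdef
      have hr0 : 0 ≤ r := by simp only [hrdef]; linarith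
      have hrI : (r : EReal) < (I x : EReal) := by
        by_contra hc2
        push_neg at hc2
        rcases eq_or_ne (I x) ⊤ with htop | htop
        · rw [htop, EReal.coe_ennreal_top] at hc2
          exact absurd (top_le_iff.1 hc2) (EReal.coe_ne_top r)
        · rw [coe_ennreal_eq_toReal htop, EReal.coe_le_coe_iff] at hc2
          have : (β : EReal) ≤ ((c p x : ℝ) : EReal) - (I x : EReal) :=
            ereal_le_sub_iff.2 ⟨htop, by simp only [hrdef] at hc2; linarith⟩
          exact absurd this (not_le.2 hlt)
      obtain ⟨s, hrs, hsI⟩ : ∃ s : ℝ, r < s ∧ ENNReal.ofReal s < I x := by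
        rcases eq_or_ne (I x) ⊤ with htop | htop
        · exact ⟨r + 1, by linarith, htop ▸ ENNReal.ofReal_lt_top⟩
        · have hrt : r < (I x).toReal := by
            rw [coe_ennreal_eq_toReal htop, EReal.coe_lt_coe_iff] at hrI; exact hrI
          refine ⟨(r + (I x).toReal) / 2, by linarith, ?_⟩
          rw [ENNReal.ofReal_lt_iff_lt_toReal (by linarith) htop]
          linarith
      have hev1 : ∀ᶠ π in 𝓝[K] x, ENNReal.ofReal s < I π := hIlsc x hxK _ hsI
      have hev2 : ∀ᶠ π in 𝓝[K] x, c p π < β + s := by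
        refine hcw.eventually_lt_const ?_
        simp only [hrdef] at hrs; linarith
      have hev' := (hev1.and hev2).filter_mono (nhdsWithin_mono x hSsub)
      obtain ⟨π, ⟨hπ1, hπ2⟩, hπS⟩ := (hev'.and hmemS).exists
      obtain ⟨hIπ, hπ3⟩ := ereal_le_sub_iff.1 (show (β : EReal) ≤
        ((c p π : ℝ) : EReal) - (I π : EReal) from hπS.2)
      have hs' : s < (I π).toReal :=
        (ENNReal.ofReal_lt_iff_lt_toReal (by linarith) hIπ).1 hπ1
      linarith
  -- quasiconcavity along segments in p
  have hqcx : ∀ π ∈ K, ∀ p₁ p₂ : P, ∀ t ∈ Icc (0:ℝ) 1,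
      g π ((1 - t) • p₁ + t • p₂) ≤ max (g π p₁) (g π p₂) := by
    intro π hπ p₁ p₂ t ht
    rcases eq_or_ne (I π) ⊤ with htop | htop
    · simp only [hg, htop, EReal.coe_ennreal_top, EReal.sub_top]
      exact bot_le
    · have hconvG := (hGconv π hπ).2 (mem_univ p₁) (mem_univ p₂)
        (by linarith [ht.2] : (0:ℝ) ≤ 1 - t) ht.1 (by ring)
      simp only [smul_eq_mul] at hconvG
      have hcseg : c ((1 - t) • p₁ + t • p₂) π ≤ (1 - t) * c p₁ π + t * c p₂ π := by
        simp only [hc]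
        have hlseg : ℓ ((1 - t) • p₁ + t • p₂) = (1 - t) * ℓ p₁ + t * ℓ p₂ := hℓlin _ _ _ _
        have e : (1 - t) * (G p₁ π - ℓ p₁) + t * (G p₂ π - ℓ p₂)
            = ((1 - t) * G p₁ π + t * G p₂ π) - ((1 - t) * ℓ p₁ + t * ℓ p₂) := by ring
        linarith [hconvG, e.le, e.ge, hlseg.le, hlseg.ge]
      have hmax : (1 - t) * c p₁ π + t * c p₂ π ≤ max (c p₁ π) (c p₂ π) := by
        have h1 : c p₁ π ≤ max (c p₁ π) (c p₂ π) := le_max_left _ _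
        have h2 : c p₂ π ≤ max (c p₁ π) (c p₂ π) := le_max_right _ _
        nlinarith [ht.1, ht.2]
      simp only [hg, coe_ennreal_eq_toReal htop]
      rw [← EReal.coe_sub, ← EReal.coe_sub, ← EReal.coe_sub]
      rcases le_total (c p₁ π) (c p₂ π) with hle | hle
      · refine le_trans ?_ (le_max_right _ _)
        rw [EReal.coe_le_coe_iff]
        have hmr : max (c p₁ π) (c p₂ π) = c p₂ π := max_eq_right hle
        linarith [hcseg, hmax, hmr.le, hmr.ge]
      · refine le_trans ?_ (le_max_left _ _)
        rw [EReal.coe_le_coe_iff]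
        have hml : max (c p₁ π) (c p₂ π) = c p₁ π := max_eq_left hle
        linarith [hcseg, hmax, hml.le, hml.ge]
  -- openness of strict superlevel sets in p
  have hopen : ∀ π ∈ K, ∀ β : ℝ, IsOpen {p : P | (β : EReal) < g π p} := by
    intro π hπ β
    rcases eq_or_ne (I π) ⊤ with htop | htop
    · have hempty : {p : P | (β : EReal) < g π p} = ∅ := by
        ext p
        simp only [hg, htop, EReal.coe_ennreal_top, EReal.sub_top, mem_setOf_eq,
          mem_empty_iff_false, iff_false, not_lt]
        exact bot_le
      rw [hempty]; exact isOpen_empty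
    · have heq : {p : P | (β : EReal) < g π p} = {p : P | β + (I π).toReal < c p π} := by
        ext p
        simp only [hg, mem_setOf_eq, ereal_lt_sub_iff, htop, ne_eq, not_false_iff, true_and]
      rw [heq]
      exact isOpen_lt continuous_const (hcont_p π hπ)
  -- the minimax equality
  set X := ⨅ p : P, ⨆ π : K, g (π : V) p with hX
  set Y := ⨆ π : K, ⨅ p : P, g (π : V) p with hY
  have hYX : Y ≤ X :=
    le_iInf fun p => iSup_le fun π =>
      le_trans (iInf_le (fun q => g (π : V) q) p) (le_iSup (fun π : K => g (π : V) p) π)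
  have hXY : X ≤ Y := by
    apply ereal_le_of_forall_real_lt
    intro α hα
    obtain ⟨β, hαβ, hβX⟩ := EReal.exists_between_coe_real hα
    have hαβ' : α < β := EReal.coe_lt_coe_iff.1 hαβ
    have hβ : ∀ p : P, ∃ π ∈ K, (β : EReal) < g π p := by
      intro p
      have hlt : (β : EReal) < ⨆ π : K, g (π : V) p :=
        lt_of_lt_of_le hβX (iInf_le (fun q => ⨆ π : K, g (π : V) q) p)
      obtain ⟨⟨π, hπ⟩, h⟩ := lt_iSup_iff.1 hlt
      exact ⟨π, hπ, h⟩
    obtain ⟨π, hπK, hπ⟩ := core g K hKcompact hconv hcl hqcx hopen α β hαβ' hβ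
    exact le_trans (le_iInf fun p => hπ p) (le_iSup (fun π : K => ⨅ p : P, g (π : V) p) ⟨π, hπK⟩)
  have hXYeq : X = Y := le_antisymm hXY hYX
  -- translate the left-hand side
  have hLHS : (⨆ p : P, ((ℓ p : ℝ) : EReal) - H p) = -X := by
    have hpt : ∀ p : P, ((ℓ p : ℝ) : EReal) - H p = -(⨆ π : K, g (π : V) p) := by
      intro p
      have h1 : ∀ π : K, g (π : V) p
          = (((G p π : ℝ) : EReal) - (I π : EReal)) - ((ℓ p : ℝ) : EReal) := by
        intro π
        rcases eq_or_ne (I (π : V)) ⊤ with htop | htop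
        · simp only [hg, htop, EReal.coe_ennreal_top, EReal.sub_top, EReal.bot_sub]
        · simp only [hg, hc, coe_ennreal_eq_toReal htop, ← EReal.coe_sub]
          exact EReal.coe_eq_coe_iff.2 (by ring)
      have h2 : (⨆ π : K, g (π : V) p)
          = (⨆ π : K, ((G p π : ℝ) : EReal) - (I π : EReal)) - ((ℓ p : ℝ) : EReal) := by
        rw [ereal_iSup_sub_const]
        exact iSup_congr h1
      rw [hH p, h2]
      exact ereal_const_sub _ _
    rw [iSup_congr hpt, ← ereal_neg_iInf]
  -- translate the right-hand side
  have hRHS : (⨅ π : K, ((⨆ p : P, ((ℓ p : ℝ) : EReal) - ((G p π : ℝ) : EReal))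
      + (I π : EReal))) = -Y := by
    have hpt : ∀ π : K, (⨆ p : P, ((ℓ p : ℝ) : EReal) - ((G p π : ℝ) : EReal))
        + (I π : EReal) = -(⨅ p : P, g (π : V) p) := by
      intro π
      rcases eq_or_ne (I (π : V)) ⊤ with htop | htop
      · have hginf : (⨅ p : P, g (π : V) p) = ⊥ := by
          have hb : ∀ p : P, g (π : V) p = ⊥ := by
            intro p; simp only [hg, htop, EReal.coe_ennreal_top, EReal.sub_top]
          rw [iInf_congr hb, iInf_const]
        rw [hginf, htop]
        have hTne : (⨆ p : P, ((ℓ p : ℝ) : EReal) - ((G p π : ℝ) : EReal)) ≠ ⊥ := by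
          obtain ⟨p₁⟩ := (inferInstance : Nonempty P)
          have hle : ((ℓ p₁ - G p₁ π : ℝ) : EReal)
              ≤ ⨆ p : P, ((ℓ p : ℝ) : EReal) - ((G p π : ℝ) : EReal) := by
            refine le_trans (le_of_eq ?_) (le_iSup _ p₁)
            rw [EReal.coe_sub]
          intro h
          rw [h, le_bot_iff] at hle
          exact EReal.coe_ne_bot _ hle
        rw [EReal.coe_ennreal_top, EReal.add_top_of_ne_bot hTne]
        simp
      · set t₀ : ℝ := (I (π : V)).toReal with ht₀
        have hptw : ∀ p : P, g (π : V) p = ((-(ℓ p - G p π) - t₀ : ℝ) : EReal) := by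
          intro p
          simp only [hg, hc, coe_ennreal_eq_toReal htop, ← ht₀, ← EReal.coe_sub]
          rw [EReal.coe_eq_coe_iff]
          ring
        have hneg : -(⨅ p : P, g (π : V) p)
            = ⨆ p : P, (((ℓ p - G p π) + t₀ : ℝ) : EReal) := by
          rw [iInf_congr hptw, ereal_neg_iInf]
          refine iSup_congr fun p => ?_
          rw [← EReal.coe_neg, EReal.coe_eq_coe_iff]
          ring
        rw [hneg, coe_ennreal_eq_toReal htop, ← ht₀]
        have hplus : (⨆ p : P, ((ℓ p : ℝ) : EReal) - ((G p π : ℝ) : EReal))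
            + ((t₀ : ℝ) : EReal)
            = ⨆ p : P, ((((ℓ p : ℝ) : EReal) - ((G p π : ℝ) : EReal)) + ((t₀ : ℝ) : EReal)) := by
          rw [show ((t₀ : ℝ) : EReal) = -((-t₀ : ℝ) : EReal) by rw [EReal.coe_neg, neg_neg],
            ← sub_eq_add_neg, ereal_iSup_sub_const]
          exact iSup_congr fun p => by rw [sub_eq_add_neg]
        rw [hplus]
        refine iSup_congr fun p => ?_
        rw [← EReal.coe_sub, ← EReal.coe_add, EReal.coe_eq_coe_iff]
    rw [iInf_congr hpt, ← ereal_neg_iSup]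
  rw [hLHS, hRHS, hXYeq]

end LegendreMinimaxAux

/-- The minimax (Sion) step in the double-optimization form of the Lagrangian: for
`H(p) = sup_{π ∈ K} (G(p,π) − I(π))` with `K` compact convex, `G` continuous, convex
in `p` and concave in `π`, and `I` convex, lower semicontinuous, `≥ 0` and not
identically `+∞`, the Legendre transform of `H` satisfies
`L(v) = inf_{π ∈ K} [sup_p (⟨p,v⟩ − G(p,π)) + I(π)]`. -/
theorem legendre_minimax {d : ℕ} {V : Type*}
    [AddCommGroup V] [Module ℝ V] [TopologicalSpace V]
    [IsTopologicalAddGroup V] [ContinuousSMul ℝ V]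
    (K : Set V) (hKcompact : IsCompact K) (hKconv : Convex ℝ K)
    (G : EuclideanSpace ℝ (Fin d) → V → ℝ)
    (hGcont : ContinuousOn (fun q : EuclideanSpace ℝ (Fin d) × V => G q.1 q.2)
      (Set.univ ×ˢ K))
    (hGconv : ∀ π ∈ K, ConvexOn ℝ Set.univ (fun p => G p π))
    (hGconc : ∀ p : EuclideanSpace ℝ (Fin d), ConcaveOn ℝ K (fun π => G p π))
    (I : V → ℝ≥0∞)
    (hIlsc : LowerSemicontinuousOn I K)
    (hIconv : ∀ π₁ ∈ K, ∀ π₂ ∈ K, ∀ a b : ℝ, 0 ≤ a → 0 ≤ b → a + b = 1 →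
      I (a • π₁ + b • π₂) ≤ ENNReal.ofReal a * I π₁ + ENNReal.ofReal b * I π₂)
    (hIproper : ∃ π ∈ K, I π ≠ ⊤)
    (H : EuclideanSpace ℝ (Fin d) → EReal)
    (hH : ∀ p, H p = ⨆ π : K, ((G p π : ℝ) : EReal) - (I π : EReal))
    (v : EuclideanSpace ℝ (Fin d)) :
    (⨆ p : EuclideanSpace ℝ (Fin d), ((⟪p, v⟫ : ℝ) : EReal) - H p)
      = ⨅ π : K,
          ((⨆ p : EuclideanSpace ℝ (Fin d), ((⟪p, v⟫ : ℝ) : EReal) - ((G p π : ℝ) : EReal))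
            + (I π : EReal)) := by
  have hℓcont : Continuous fun p : EuclideanSpace ℝ (Fin d) => (⟪p, v⟫ : ℝ) :=
    continuous_id.inner continuous_const
  have hℓlin : ∀ (a b : ℝ) (p q : EuclideanSpace ℝ (Fin d)),
      (⟪a • p + b • q, v⟫ : ℝ) = a * ⟪p, v⟫ + b * ⟪q, v⟫ := by
    intro a b p q
    rw [inner_add_left, real_inner_smul_left, real_inner_smul_left]
  exact LegendreMinimaxAux.aux_minimax K hKcompact hKconv G hGcont hGconv hGconc I hIlsc
    hIconv hIproper H (fun p => (⟪p, v⟫ : ℝ)) hℓcont hℓlin hH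
end
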